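/- Let 0 < M < 1, let δ satisfy 0 ≤ δ < M (so in particular δ + 1 − M > 0), let γ > 0 and 0 < r ≤ 1/2. Let ω : ℝ² \ {0} → ℝ² be C¹ and positively homogeneous of degree M (ω(λa) = λ^M ω(a) for λ > 0), and set C₀ := sup_{‖u‖=1} ‖Dω(u)‖, which is finite. Then for every k ∈ ℤ² \ {0} and every a, ā ∈ ℝ² with ‖a − ā‖ ≤ r, ‖a‖ ≥ max{1, (2C₀r/γ)^{1/(δ+1−M)}} and |ω(ā) · k| ≤ γ ‖k‖ ‖ā‖^δ, one has |ω(a) · k| ≤ 2^{δ+1} γ ‖k‖ ‖a‖^δ. That is, at points of sufficiently large norm, the r-enlargement of the resonant set {a : |ω(a)·k| ≤ γ‖k‖‖a‖^δ} is contained in the resonant set with parameter 2^{δ+1}γ. -/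

import Mathlib

open Real
open scoped RealInnerProductSpace

noncomputable section

abbrev E2 := EuclideanSpace ℝ (Fin 2)

/-- The point of `ℝ²` (with the Euclidean norm) associated to an integer vector `k ∈ ℤ²`. -/
noncomputable def kv (k : Fin 2 → ℤ) : E2 :=
  EuclideanSpace.single 0 (k 0 : ℝ) + EuclideanSpace.single 1 (k 1 : ℝ)

/-- `C₀ = sup_{‖u‖=1} ‖Dω(u)‖`. -/
noncomputable def supDeriv (ω : E2 → E2) : ℝ :=
  sSup {c : ℝ | ∃ u : E2, ‖u‖ = 1 ∧ c = ‖fderiv ℝ ω u‖}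

lemma aux_bdd (ω : E2 → E2) (hω : ContDiffOn ℝ 1 ω {(0 : E2)}ᶜ) :
    BddAbove {c : ℝ | ∃ u : E2, ‖u‖ = 1 ∧ c = ‖fderiv ℝ ω u‖} := by
  have hset : {c : ℝ | ∃ u : E2, ‖u‖ = 1 ∧ c = ‖fderiv ℝ ω u‖} =
      (fun u => ‖fderiv ℝ ω u‖) '' Metric.sphere (0 : E2) 1 := by
    ext c
    constructor
    · rintro ⟨u, hu, rfl⟩
      exact ⟨u, by simp [hu], rfl⟩
    · rintro ⟨u, hu, rfl⟩
      exact ⟨u, by simpa using hu, rfl⟩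
  rw [hset]
  apply (isCompact_sphere (0 : E2) 1).bddAbove_image
  apply ContinuousOn.norm
  apply (hω.continuousOn_fderiv_of_isOpen isOpen_compl_singleton le_rfl).mono
  intro x hx
  simp only [Set.mem_compl_iff, Set.mem_singleton_iff]
  intro h
  rw [h] at hx
  simpa using hx

lemma aux_le_sup (ω : E2 → E2) (hω : ContDiffOn ℝ 1 ω {(0 : E2)}ᶜ) (u : E2) (hu : ‖u‖ = 1) :
    ‖fderiv ℝ ω u‖ ≤ supDeriv ω :=
  le_csSup (aux_bdd ω hω) ⟨u, hu, rfl⟩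

lemma aux_sup_nonneg (ω : E2 → E2) (hω : ContDiffOn ℝ 1 ω {(0 : E2)}ᶜ) :
    0 ≤ supDeriv ω :=
  le_trans (norm_nonneg _) (aux_le_sup ω hω (EuclideanSpace.single 0 1) (by simp))

lemma aux_scale (M : ℝ) (ω : E2 → E2) (hω : ContDiffOn ℝ 1 ω {(0 : E2)}ᶜ)
    (hhom : ∀ lam : ℝ, 0 < lam → ∀ a : E2, a ≠ 0 → ω (lam • a) = lam ^ M • ω a)
    (lam : ℝ) (hlam : 0 < lam) (a : E2) (ha : a ≠ 0) :
    ‖fderiv ℝ ω (lam • a)‖ = lam ^ (M - 1) * ‖fderiv ℝ ω a‖ := by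
  have hdiff : ∀ x : E2, x ≠ 0 → DifferentiableAt ℝ ω x := fun x hx =>
    (hω.contDiffAt (isOpen_compl_singleton.mem_nhds hx)).differentiableAt one_ne_zero
  have hla : lam • a ≠ 0 := smul_ne_zero (ne_of_gt hlam) ha
  have hda := hdiff a ha
  have hdla := hdiff _ hla
  set L : E2 →L[ℝ] E2 := lam • ContinuousLinearMap.id ℝ E2 with hL
  have hLapp : ∀ x : E2, L x = lam • x := fun x => rfl
  -- fderiv of x ↦ ω (lam • x) at a, two ways
  have h1 : fderiv ℝ (fun x => ω (lam • x)) a = (fderiv ℝ ω (lam • a)).comp L := by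
    have hc : fderiv ℝ (ω ∘ ⇑L) a = (fderiv ℝ ω (L a)).comp (fderiv ℝ (⇑L) a) :=
      fderiv_comp a (by exact hdla) L.differentiableAt
    have : (fun x => ω (lam • x)) = ω ∘ ⇑L := rfl
    rw [this, hc, L.fderiv]
    rfl
  have h2 : fderiv ℝ (fun x => ω (lam • x)) a = lam ^ M • fderiv ℝ ω a := by
    have hev : (fun x => ω (lam • x)) =ᶠ[nhds a] (fun x => lam ^ M • ω x) := by
      filter_upwards [isOpen_compl_singleton.mem_nhds ha] with x hx
      exact hhom lam hlam x hx
    rw [hev.fderiv_eq, fderiv_fun_const_smul hda]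
  have h3 : lam • fderiv ℝ ω (lam • a) = lam ^ M • fderiv ℝ ω a := by
    rw [← h2, h1]
    ext v
    simp [hLapp, (fderiv ℝ ω (lam • a)).map_smul]
  have h4 : lam * ‖fderiv ℝ ω (lam • a)‖ = lam ^ M * ‖fderiv ℝ ω a‖ := by
    have := congrArg norm h3
    rwa [norm_smul, norm_smul, Real.norm_eq_abs, Real.norm_eq_abs,
      abs_of_pos hlam, abs_of_pos (Real.rpow_pos_of_pos hlam M)] at this
  have : ‖fderiv ℝ ω (lam • a)‖ = lam ^ M / lam * ‖fderiv ℝ ω a‖ := by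
    field_simp at h4 ⊢
    linarith [h4]
  rw [this, Real.rpow_sub hlam, Real.rpow_one]

lemma aux_bound (M : ℝ) (ω : E2 → E2) (hω : ContDiffOn ℝ 1 ω {(0 : E2)}ᶜ)
    (hhom : ∀ lam : ℝ, 0 < lam → ∀ a : E2, a ≠ 0 → ω (lam • a) = lam ^ M • ω a)
    (x : E2) (hx : x ≠ 0) :
    ‖fderiv ℝ ω x‖ ≤ supDeriv ω * ‖x‖ ^ (M - 1) := by
  have hnx : (0 : ℝ) < ‖x‖ := norm_pos_iff.mpr hx
  set u : E2 := ‖x‖⁻¹ • x with hu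
  have hnu : ‖u‖ = 1 := by
    rw [hu, norm_smul, norm_inv, norm_norm, inv_mul_cancel₀ (ne_of_gt hnx)]
  have hune : u ≠ 0 := by
    intro h; rw [h] at hnu; simp at hnu
  have hxu : x = ‖x‖ • u := by
    rw [hu, smul_smul, mul_inv_cancel₀ (ne_of_gt hnx), one_smul]
  calc ‖fderiv ℝ ω x‖ = ‖x‖ ^ (M - 1) * ‖fderiv ℝ ω u‖ := by
        rw [← aux_scale M ω hω hhom ‖x‖ hnx u hune, ← hxu]
    _ ≤ ‖x‖ ^ (M - 1) * supDeriv ω := by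
        apply mul_le_mul_of_nonneg_left (aux_le_sup ω hω u hnu)
        positivity
    _ = supDeriv ω * ‖x‖ ^ (M - 1) := mul_comm _ _


/-- At points of large enough norm, the `r`-enlargement of the resonant set
`{a : |ω(a)·k| ≤ γ‖k‖‖a‖^δ}` is contained in the resonant set with parameter `2^{δ+1}γ`. -/
theorem stmt10 (M δ γ r : ℝ) (hM0 : 0 < M) (hM1 : M < 1)
    (hδ0 : 0 ≤ δ) (hδM : δ < M) (hγ : 0 < γ) (hr : 0 < r) (hr' : r ≤ 1 / 2)
    (ω : E2 → E2) (hω : ContDiffOn ℝ 1 ω {(0 : E2)}ᶜ)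
    (hhom : ∀ lam : ℝ, 0 < lam → ∀ a : E2, a ≠ 0 → ω (lam • a) = lam ^ M • ω a) :
    ∀ k : Fin 2 → ℤ, k ≠ 0 → ∀ a abar : E2,
      ‖a - abar‖ ≤ r →
      max 1 ((2 * supDeriv ω * r / γ) ^ (1 / (δ + 1 - M))) ≤ ‖a‖ →
      |⟪ω abar, kv k⟫| ≤ γ * ‖kv k‖ * ‖abar‖ ^ δ →
      |⟪ω a, kv k⟫| ≤ 2 ^ (δ + 1) * γ * ‖kv k‖ * ‖a‖ ^ δ := by
  intro k hk a abar haa hmax hres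
  have hC0 : 0 ≤ supDeriv ω := aux_sup_nonneg ω hω
  set C₀ := supDeriv ω with hC₀
  have hR1 : 1 ≤ ‖a‖ := le_trans (le_max_left _ _) hmax
  have hR2 : (2 * C₀ * r / γ) ^ (1 / (δ + 1 - M)) ≤ ‖a‖ :=
    le_trans (le_max_right _ _) hmax
  set R := ‖a‖ with hRdef
  have hRpos : (0 : ℝ) < R := lt_of_lt_of_le one_pos hR1
  have hrR : r ≤ R / 2 := le_trans hr' (by linarith)
  have hball : ∀ x ∈ Metric.closedBall a r, R / 2 ≤ ‖x‖ := by
    intro x hx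
    rw [Metric.mem_closedBall, dist_comm, dist_eq_norm] at hx
    have h1 := norm_sub_norm_le a x
    rw [← hRdef] at h1
    linarith
  have hball0 : ∀ x ∈ Metric.closedBall a r, x ≠ 0 := by
    intro x hx h0
    have := hball x hx
    rw [h0, norm_zero] at this
    linarith
  have hdiff : ∀ x : E2, x ≠ 0 → DifferentiableAt ℝ ω x := fun x hx =>
    (hω.contDiffAt (isOpen_compl_singleton.mem_nhds hx)).differentiableAt one_ne_zero
  set Cb := C₀ * (R / 2) ^ (M - 1) with hCb
  have hCbnn : 0 ≤ Cb := by
    apply mul_nonneg hC0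
    positivity
  have hfb : ∀ x ∈ Metric.closedBall a r, ‖fderiv ℝ ω x‖ ≤ Cb := by
    intro x hx
    calc ‖fderiv ℝ ω x‖ ≤ C₀ * ‖x‖ ^ (M - 1) :=
          aux_bound M ω hω hhom x (hball0 x hx)
      _ ≤ Cb := by
          apply mul_le_mul_of_nonneg_left _ hC0
          exact Real.rpow_le_rpow_of_nonpos (by linarith) (hball x hx) (by linarith)
  have habar_mem : abar ∈ Metric.closedBall a r := by
    rw [Metric.mem_closedBall, dist_eq_norm, ← norm_neg]
    simpa [neg_sub] using haa
  have ha_mem : a ∈ Metric.closedBall a r := Metric.mem_closedBall_self hr.le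
  have hmvt : ‖ω a - ω abar‖ ≤ Cb * r := by
    have := (convex_closedBall a r).norm_image_sub_le_of_norm_fderiv_le
      (fun x hx => hdiff x (hball0 x hx)) hfb habar_mem ha_mem
    calc ‖ω a - ω abar‖ ≤ Cb * ‖a - abar‖ := this
      _ ≤ Cb * r := mul_le_mul_of_nonneg_left haa hCbnn
  -- ‖abar‖ ≤ 2R
  have habar2 : ‖abar‖ ^ δ ≤ 2 ^ δ * R ^ δ := by
    have h1 : ‖abar‖ ≤ 2 * R := by
      have h2 := norm_sub_norm_le abar a
      rw [← norm_neg (abar - a), neg_sub] at h2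
      have : ‖abar‖ - R ≤ r := by
        calc ‖abar‖ - R ≤ ‖a - abar‖ := h2
          _ ≤ r := haa
      linarith
    calc ‖abar‖ ^ δ ≤ (2 * R) ^ δ :=
          Real.rpow_le_rpow (norm_nonneg _) h1 hδ0
      _ = 2 ^ δ * R ^ δ := Real.mul_rpow (by norm_num) hRpos.le
  -- Cb * r ≤ 2 * C₀ * r * R ^ (M - 1)
  have hCbr : Cb * r ≤ 2 * C₀ * r * R ^ (M - 1) := by
    have h2pow : (2 : ℝ) ^ (1 - M) ≤ 2 := by
      calc (2 : ℝ) ^ (1 - M) ≤ (2 : ℝ) ^ (1 : ℝ) :=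
            Real.rpow_le_rpow_of_exponent_le (by norm_num) (by linarith)
        _ = 2 := Real.rpow_one 2
    have heq : (R / 2) ^ (M - 1) = R ^ (M - 1) * 2 ^ (1 - M) := by
      rw [Real.div_rpow hRpos.le (by norm_num : (0:ℝ) ≤ 2), div_eq_mul_inv,
        ← Real.rpow_neg (by norm_num : (0:ℝ) ≤ 2)]
      norm_num
    rw [hCb, heq]
    have hRM : (0:ℝ) ≤ R ^ (M - 1) := (Real.rpow_pos_of_pos hRpos _).le
    nlinarith [Real.rpow_pos_of_pos hRpos (M - 1), mul_nonneg hC0 hRM,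
      mul_nonneg (mul_nonneg hC0 hRM) hr.le]
  -- 2 * C₀ * r * R ^ (M - 1) ≤ γ * R ^ δ
  have hkey : 2 * C₀ * r * R ^ (M - 1) ≤ γ * R ^ δ := by
    have he : (0 : ℝ) < δ + 1 - M := by linarith
    have hnn : (0 : ℝ) ≤ 2 * C₀ * r / γ := by positivity
    have h1 : 2 * C₀ * r / γ ≤ R ^ (δ + 1 - M) := by
      have h2 := Real.rpow_le_rpow (Real.rpow_nonneg hnn _) hR2 he.le
      rwa [← Real.rpow_mul hnn, one_div, inv_mul_cancel₀ he.ne', Real.rpow_one] at h2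
    have h3 : 2 * C₀ * r ≤ γ * R ^ (δ + 1 - M) := by
      rw [div_le_iff₀ hγ] at h1
      linarith [h1]
    calc 2 * C₀ * r * R ^ (M - 1) ≤ γ * R ^ (δ + 1 - M) * R ^ (M - 1) :=
          mul_le_mul_of_nonneg_right h3 (Real.rpow_pos_of_pos hRpos _).le
      _ = γ * R ^ δ := by
          rw [mul_assoc, ← Real.rpow_add hRpos]
          ring_nf
  -- assemble
  have hsplit : |⟪ω a, kv k⟫| ≤ |⟪ω abar, kv k⟫| + ‖ω a - ω abar‖ * ‖kv k‖ := by
    have h1 : ⟪ω a, kv k⟫ = ⟪ω abar, kv k⟫ + ⟪ω a - ω abar, kv k⟫ := by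
      rw [inner_sub_left]; ring
    calc |⟪ω a, kv k⟫| ≤ |⟪ω abar, kv k⟫| + |⟪ω a - ω abar, kv k⟫| := by
          rw [h1]; exact abs_add_le _ _
      _ ≤ |⟪ω abar, kv k⟫| + ‖ω a - ω abar‖ * ‖kv k‖ := by
          gcongr
          exact abs_real_inner_le_norm _ _
  have hK : (0:ℝ) ≤ ‖kv k‖ := norm_nonneg _
  have h2d : (1:ℝ) ≤ 2 ^ δ := Real.one_le_rpow (by norm_num) hδ0
  have h2d1 : (2:ℝ) ^ (δ + 1) = 2 * 2 ^ δ := by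
    rw [Real.rpow_add (by norm_num : (0:ℝ) < 2), Real.rpow_one]; ring
  have hRd : (0:ℝ) < R ^ δ := Real.rpow_pos_of_pos hRpos _
  calc |⟪ω a, kv k⟫| ≤ |⟪ω abar, kv k⟫| + ‖ω a - ω abar‖ * ‖kv k‖ := hsplit
    _ ≤ γ * ‖kv k‖ * ‖abar‖ ^ δ + (Cb * r) * ‖kv k‖ := by
        gcongr
    _ ≤ γ * ‖kv k‖ * (2 ^ δ * R ^ δ) + (γ * R ^ δ) * ‖kv k‖ := by
        apply add_le_add
        · exact mul_le_mul_of_nonneg_left habar2 (mul_nonneg hγ.le hK)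
        · exact mul_le_mul_of_nonneg_right (hCbr.trans hkey) hK
    _ ≤ 2 ^ (δ + 1) * γ * ‖kv k‖ * R ^ δ := by
        rw [h2d1]
        nlinarith [mul_nonneg (mul_nonneg hγ.le hK) hRd.le]
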